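/- The sum over all alternating-sign matrices A of order n of 2^{μ(A)}, where μ(A) is the number of entries of A equal to -1, equals 2^{n(n-1)/2}. -/

import Mathlib

open Finset
namespace ASM2



/-- Vandermonde product. -/
def Vq (k : ℕ) (v : Fin k → ℚ) : ℚ := ∏ i, ∏ j ∈ Finset.Ioi i, (v j - v i)

def wcount {k : ℕ} (a : Fin k → ℕ) (b : Fin (k + 1) → ℕ) : ℕ :=
  (Finset.univ.filter (fun i : Fin k => b i.castSucc < a i ∧ a i < b i.succ)).card

noncomputable def G (j y : ℕ) : ℚ := 2 * (∑ x ∈ Finset.range y, (x : ℚ) ^ j) + (y : ℚ) ^ j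

noncomputable def cc (j l : ℕ) : ℚ :=
  2 * bernoulli (j - l) * ((j + 1).choose (j - l)) / (j + 1) + (if l + 1 = j then 1 else 0)

lemma cc_diag (j : ℕ) : cc j j = 2 / (j + 1) := by
  simp only [cc, Nat.sub_self, bernoulli_zero, Nat.choose_zero_right, Nat.cast_one, mul_one,
    if_neg (by omega : ¬ j + 1 = j)]
  push_cast; ring

lemma G_eq (j y : ℕ) :
    G j y = (∑ l ∈ range (j + 1), cc j l * (y : ℚ) ^ (l + 1)) + (if j = 0 then 1 else 0) := by
  have h1 : (2 : ℚ) * (∑ x ∈ Finset.range y, (x : ℚ) ^ j)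
      = ∑ l ∈ range (j + 1),
          2 * bernoulli (j - l) * ((j + 1).choose (j - l)) / (j + 1) * (y : ℚ) ^ (l + 1) := by
    rw [sum_range_pow, Finset.mul_sum]
    rw [← Finset.sum_range_reflect]
    refine Finset.sum_congr rfl fun l hl => ?_
    rw [Finset.mem_range] at hl
    have h2 : j + 1 - 1 - l = j - l := by omega
    have h3 : j + 1 - (j - l) = l + 1 := by omega
    rw [h2, h3]
    ring
  have h2 : (y : ℚ) ^ j
      = (∑ l ∈ range (j + 1), (if l + 1 = j then (1:ℚ) else 0) * (y : ℚ) ^ (l + 1))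
        + (if j = 0 then 1 else 0) := by
    rcases j with _ | m
    · simp
    · have : ∀ l ∈ range (m + 2), (if l + 1 = m + 1 then (1:ℚ) else 0) * (y : ℚ) ^ (l + 1)
          = if l = m then (y : ℚ) ^ (m + 1) else 0 := by
        intro l _
        by_cases h : l = m <;> simp [h] <;> omega
      rw [Finset.sum_congr rfl this, Finset.sum_ite_eq' (range (m + 2)) m]
      simp
  simp only [G, cc, add_mul]
  rw [h1, h2, Finset.sum_add_distrib]
  ring

lemma G_diff (j y x : ℕ) :
    G j y - G j x = ∑ l ∈ range (j + 1), cc j l * ((y : ℚ) ^ (l + 1) - (x : ℚ) ^ (l + 1)) := by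
  rw [G_eq, G_eq]
  simp only [mul_sub]
  rw [Finset.sum_sub_distrib]
  ring

lemma rowsum (j p q : ℕ) (hpq : p < q) :
    ∑ x ∈ Finset.Icc p q, (if p < x ∧ x < q then (2 : ℚ) else 1) * (x : ℚ) ^ j
      = G j q - G j p := by
  have key : ∀ x ∈ Finset.Icc p q,
      (if p < x ∧ x < q then (2 : ℚ) else 1) * (x : ℚ) ^ j
        = 2 * (x : ℚ) ^ j - ((if x = p then (p:ℚ)^j else 0) + (if x = q then (q:ℚ)^j else 0)) := by
    intro x hx
    rw [Finset.mem_Icc] at hx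
    by_cases h1 : x = p
    · subst h1
      rw [if_neg (by omega), if_pos rfl, if_neg (by omega)]; ring
    · by_cases h2 : x = q
      · subst h2; rw [if_neg (by omega), if_neg (by omega), if_pos rfl]; ring
      · rw [if_pos (by omega), if_neg h1, if_neg h2]; ring
  rw [Finset.sum_congr rfl key, Finset.sum_sub_distrib, Finset.sum_add_distrib]
  rw [Finset.sum_ite_eq' (Finset.Icc p q) p, Finset.sum_ite_eq' (Finset.Icc p q) q]
  rw [if_pos (by rw [Finset.mem_Icc]; omega), if_pos (by rw [Finset.mem_Icc]; omega)]
  have : ∑ x ∈ Finset.Icc p q, 2 * (x : ℚ) ^ j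
      = 2 * ((∑ x ∈ range (q+1), (x : ℚ) ^ j) - ∑ x ∈ range p, (x : ℚ) ^ j) := by
    rw [← Finset.mul_sum]
    congr 1
    rw [← Finset.Ico_add_one_right_eq_Icc, Finset.sum_Ico_eq_sub _ (by omega), Finset.range_eq_Ico]
  rw [this, Finset.sum_range_succ]
  simp only [G]
  ring




noncomputable def CMat (k : ℕ) : Matrix (Fin k) (Fin k) ℚ :=
  Matrix.of fun l j => if (l : ℕ) < (j : ℕ) + 1 then cc j l else 0

def AMat {k : ℕ} (b : Fin (k + 1) → ℕ) : Matrix (Fin k) (Fin k) ℚ :=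
  Matrix.of fun i l => ((b i.succ : ℚ)) ^ ((l : ℕ) + 1) - ((b i.castSucc : ℚ)) ^ ((l : ℕ) + 1)

lemma det_CMat (k : ℕ) : (CMat k).det = 2 ^ k / (k.factorial : ℚ) := by
  have htri : (CMat k).BlockTriangular id := by
    intro l j h
    simp only [id] at h
    simp only [CMat, Matrix.of_apply]
    rw [if_neg (by omega)]
  rw [Matrix.det_of_upperTriangular htri]
  have : ∀ j : Fin k, CMat k j j = 2 / ((j : ℚ) + 1) := by
    intro j
    simp only [CMat, Matrix.of_apply, if_pos (by omega : (j:ℕ) < (j:ℕ) + 1), cc_diag]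
  rw [Finset.prod_congr rfl (fun j _ => this j)]
  rw [Finset.prod_div_distrib, Finset.prod_const]
  have : ∏ j : Fin k, ((j : ℚ) + 1) = (k.factorial : ℚ) := by
    rw [← Finset.prod_range_add_one_eq_factorial]
    push_cast
    rw [Fin.prod_univ_eq_prod_range (fun i => (i : ℚ) + 1)]
  rw [this, Finset.card_univ, Fintype.card_fin]


/-- The lower bidiagonal matrix used for row reduction. -/
def LMat (k : ℕ) : Matrix (Fin (k + 1)) (Fin (k + 1)) ℚ :=
  Matrix.of fun i j => if i = j then 1 else if (j : ℕ) + 1 = (i : ℕ) then -1 else 0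

/-- The row-differenced Vandermonde. -/
def NMat {k : ℕ} (b : Fin (k + 1) → ℕ) : Matrix (Fin (k + 1)) (Fin (k + 1)) ℚ :=
  Matrix.of fun i j =>
    Fin.cases ((b 0 : ℚ) ^ (j : ℕ))
      (fun i' => (b i'.succ : ℚ) ^ (j : ℕ) - (b i'.castSucc : ℚ) ^ (j : ℕ)) i

lemma det_LMat (k : ℕ) : (LMat k).det = 1 := by
  have htri : (LMat k).BlockTriangular OrderDual.toDual := by
    intro i j h
    simp only [OrderDual.toDual_lt_toDual] at h
    simp only [LMat, Matrix.of_apply]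
    rw [if_neg (by omega : ¬ i = j), if_neg (by omega)]
  rw [Matrix.det_of_lowerTriangular _ htri]
  simp [LMat]

lemma LMat_mul_vandermonde {k : ℕ} (b : Fin (k + 1) → ℕ) :
    LMat k * Matrix.vandermonde (fun i => (b i : ℚ)) = NMat b := by
  ext i j
  simp only [Matrix.mul_apply, LMat, Matrix.vandermonde, NMat, Matrix.of_apply]
  induction i using Fin.cases with
  | zero =>
    rw [Finset.sum_eq_single 0]
    · simp
    · intro m _ hm
      rw [if_neg (Ne.symm hm), if_neg (by simp)]
      ring
    · simp
  | succ i' =>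
    simp only [Fin.cases_succ]
    have hsplit : ∀ m : Fin (k + 1),
        (if i'.succ = m then (1:ℚ) else if (m : ℕ) + 1 = (i'.succ : ℕ) then -1 else 0)
          = (if m = i'.succ then (1:ℚ) else 0) + (if m = i'.castSucc then (-1:ℚ) else 0) := by
      intro m
      by_cases h1 : m = i'.succ
      · subst h1
        rw [if_pos rfl, if_pos rfl, if_neg (by
          intro h
          have := congrArg Fin.val h
          simp only [Fin.val_succ, Fin.coe_castSucc] at this
          omega)]
        ring
      · rw [if_neg (Ne.symm h1), if_neg h1]
        by_cases h2 : m = i'.castSucc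
        · subst h2
          rw [if_pos (by simp [Fin.val_succ]), if_pos rfl]
          ring
        · rw [if_neg ?_, if_neg h2]
          · ring
          · intro h
            apply h2
            have : (m : ℕ) = (i'.castSucc : ℕ) := by simp [Fin.val_succ] at h ⊢; omega
            exact Fin.ext this
    rw [Finset.sum_congr rfl (fun m _ => by rw [hsplit m])]
    simp only [add_mul]
    rw [Finset.sum_add_distrib]
    simp only [ite_mul, one_mul, zero_mul, neg_one_mul]
    rw [Finset.sum_ite_eq' Finset.univ i'.succ, Finset.sum_ite_eq' Finset.univ i'.castSucc]
    simp
    ring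

lemma det_AMat {k : ℕ} (b : Fin (k + 1) → ℕ) :
    (AMat b).det = Vq (k + 1) (fun i => (b i : ℚ)) := by
  have h1 : (NMat b).det = Vq (k + 1) (fun i => (b i : ℚ)) := by
    rw [← LMat_mul_vandermonde b, Matrix.det_mul, det_LMat, one_mul,
      Matrix.det_vandermonde]
    rfl
  rw [← h1, Matrix.det_succ_column_zero]
  rw [Finset.sum_eq_single 0]
  · simp only [Fin.val_zero, pow_zero, one_mul, Fin.succAbove_zero]
    have h00 : NMat b 0 0 = 1 := by simp [NMat]
    have hsub : (NMat b).submatrix Fin.succ Fin.succ = AMat b := by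
      ext i l
      simp [NMat, AMat, Fin.val_succ]
    rw [h00, hsub, one_mul]
  · intro m _ hm
    have : NMat b m 0 = 0 := by
      induction m using Fin.cases with
      | zero => exact absurd rfl hm
      | succ i' => simp [NMat]
    rw [this]; ring
  · simp









lemma stepSum (k : ℕ) (b : Fin (k + 1) → ℕ) (hb : StrictMono b) :
    ∑ a ∈ Finset.Icc (fun i => b i.castSucc) (fun i => b i.succ),
      (2 : ℚ) ^ (wcount a b) * Vq k (fun i => (a i : ℚ))
    = 2 ^ k / (k.factorial : ℚ) * Vq (k + 1) (fun i => (b i : ℚ)) := by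
  classical
  set f := (Matrix.detRowAlternating : (Fin k → ℚ) [⋀^Fin k]→ₗ[ℚ] ℚ).toMultilinearMap with hf
  set g : Π _ : Fin k, ℕ → (Fin k → ℚ) :=
    fun i x => (if b i.castSucc < x ∧ x < b i.succ then (2 : ℚ) else 1) •
      fun j : Fin k => (x : ℚ) ^ (j : ℕ) with hg
  have step2 : ∀ a : Fin k → ℕ,
      (2 : ℚ) ^ (wcount a b) * Vq k (fun i => (a i : ℚ)) = f (fun i => g i (a i)) := by
    intro a
    simp only [hg]
    rw [MultilinearMap.map_smul_univ]
    congr 1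
    · rw [wcount, ← Finset.prod_const, Finset.prod_filter]
    · have : f (fun i (j : Fin k) => ((a i : ℚ)) ^ (j : ℕ))
          = (Matrix.vandermonde (fun i => (a i : ℚ))).det := rfl
      rw [this, Matrix.det_vandermonde]
      rfl
  rw [Pi.Icc_eq]
  rw [Finset.sum_congr rfl (fun a _ => step2 a)]
  rw [← MultilinearMap.map_sum_finset]
  have rows : (fun i => ∑ x ∈ Finset.Icc (b i.castSucc) (b i.succ), g i x)
      = fun i (j : Fin k) => G (j : ℕ) (b i.succ) - G (j : ℕ) (b i.castSucc) := by
    funext i j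
    rw [Finset.sum_apply]
    simp only [hg, Pi.smul_apply, smul_eq_mul]
    exact rowsum (j : ℕ) _ _ (hb i.castSucc_lt_succ)
  rw [rows]
  have hM : f (fun i (j : Fin k) => G (j : ℕ) (b i.succ) - G (j : ℕ) (b i.castSucc))
      = (AMat b * CMat k).det := by
    have h1 : f (fun i (j : Fin k) => G (j : ℕ) (b i.succ) - G (j : ℕ) (b i.castSucc))
        = (Matrix.of fun i (j : Fin k) => G (j : ℕ) (b i.succ) - G (j : ℕ) (b i.castSucc)).det :=
      rfl
    rw [h1]
    congr 1
    ext i j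
    rw [Matrix.mul_apply]
    simp only [Matrix.of_apply, AMat, CMat]
    rw [G_diff]
    have hconv : ∀ l : Fin k,
        (((b i.succ : ℚ)) ^ ((l : ℕ) + 1) - ((b i.castSucc : ℚ)) ^ ((l : ℕ) + 1)) *
            (if (l : ℕ) < (j : ℕ) + 1 then cc (j : ℕ) (l : ℕ) else 0)
          = (fun m : ℕ => (((b i.succ : ℚ)) ^ (m + 1) - ((b i.castSucc : ℚ)) ^ (m + 1)) *
              (if m < (j : ℕ) + 1 then cc (j : ℕ) m else 0)) (l : ℕ) := fun l => rfl
    have hfr := Fin.sum_univ_eq_sum_range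
      (fun m : ℕ => (((b i.succ : ℚ)) ^ (m + 1) - ((b i.castSucc : ℚ)) ^ (m + 1)) *
        (if m < (j : ℕ) + 1 then cc (j : ℕ) m else 0)) k
    rw [Finset.sum_congr rfl (fun l _ => hconv l), hfr]
    rw [← Finset.sum_subset (Finset.range_subset_range.mpr (by omega : (j : ℕ) + 1 ≤ k))
      (fun x _ hx => by rw [if_neg (by simpa using hx), mul_zero])]
    refine Finset.sum_congr rfl fun l hl => ?_
    rw [if_pos (by simpa using hl)]
    ring
  rw [hM, Matrix.det_mul, det_AMat, det_CMat]
  ring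



def χ {n m : ℕ} (c : Fin m → ℕ) : Fin n → ℤ := fun j => if ∃ i, c i = (j : ℕ) then 1 else 0

def Ncnt {m : ℕ} (c : Fin m → ℕ) (t : ℕ) : ℕ := (univ.filter (fun i : Fin m => c i ≤ t)).card

lemma chi_vals {n m : ℕ} (c : Fin m → ℕ) (j : Fin n) : χ c j = 0 ∨ χ c j = 1 := by
  unfold χ; split <;> simp

lemma le_of_lt_Ncnt {m : ℕ} {c : Fin m → ℕ} (hc : Monotone c) {i : Fin m} {t : ℕ}
    (h : (i : ℕ) < Ncnt c t) : c i ≤ t := by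
  by_contra hct
  have hsub : univ.filter (fun l : Fin m => c l ≤ t) ⊆ Finset.Iio i := by
    intro l hl
    rw [mem_filter] at hl
    rw [Finset.mem_Iio]
    by_contra hli
    push_neg at hli
    exact hct (le_trans (hc hli) hl.2)
  have hcard := Finset.card_le_card hsub
  rw [Fin.card_Iio] at hcard
  unfold Ncnt at h
  omega

lemma lt_Ncnt_of_le {m : ℕ} {c : Fin m → ℕ} (hc : Monotone c) {i : Fin m} {t : ℕ}
    (h : c i ≤ t) : (i : ℕ) < Ncnt c t := by
  have hsub : Finset.Iic i ⊆ univ.filter (fun l : Fin m => c l ≤ t) := by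
    intro l hl
    rw [Finset.mem_Iic] at hl
    rw [mem_filter]
    exact ⟨mem_univ l, le_trans (hc hl) h⟩
  have hcard := Finset.card_le_card hsub
  rw [Fin.card_Iic] at hcard
  unfold Ncnt
  omega

lemma sum_chi_le {n m : ℕ} (c : Fin m → ℕ) (hc : StrictMono c) (hcn : ∀ i, c i < n) (j : Fin n) :
    ∑ j' ∈ univ.filter (fun j' : Fin n => j' ≤ j), χ c j' = (Ncnt c (j : ℕ) : ℤ) := by
  unfold χ
  rw [Finset.sum_boole, Finset.filter_filter]
  norm_cast
  unfold Ncnt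
  apply (Finset.card_bij (fun (i : Fin m) _ => (⟨c i, hcn i⟩ : Fin n)) ?_ ?_ ?_).symm
  · intro i hi
    rw [mem_filter] at hi ⊢
    refine ⟨mem_univ _, ?_, ⟨i, rfl⟩⟩
    rw [Fin.le_def]
    exact hi.2
  · intro i₁ h₁ i₂ h₂ h
    have : c i₁ = c i₂ := by simpa [Fin.ext_iff] using h
    exact hc.injective this
  · intro j' hj'
    rw [mem_filter] at hj'
    obtain ⟨-, hle, i, hi⟩ := hj'
    refine ⟨i, ?_, ?_⟩
    · rw [mem_filter]
      refine ⟨mem_univ _, ?_⟩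
      rw [hi]
      exact hle
    · exact Fin.ext (by simpa using hi)

lemma sum_chi {n m : ℕ} (c : Fin m → ℕ) (hc : StrictMono c) (hcn : ∀ i, c i < n) :
    ∑ j : Fin n, χ c j = (m : ℤ) := by
  unfold χ
  rw [Finset.sum_boole]
  norm_cast
  have : (univ.filter (fun j : Fin n => ∃ i, c i = (j : ℕ))).card = (univ : Finset (Fin m)).card := by
    apply (Finset.card_bij (fun (i : Fin m) _ => (⟨c i, hcn i⟩ : Fin n)) ?_ ?_ ?_).symm
    · intro i hi
      rw [mem_filter]
      exact ⟨mem_univ _, ⟨i, rfl⟩⟩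
    · intro i₁ h₁ i₂ h₂ h
      have : c i₁ = c i₂ := by simpa [Fin.ext_iff] using h
      exact hc.injective this
    · intro j' hj'
      rw [mem_filter] at hj'
      obtain ⟨-, i, hi⟩ := hj'
      exact ⟨i, mem_univ _, Fin.ext (by simpa using hi)⟩
  rw [this, card_univ, Fintype.card_fin]

lemma card_neg_one {n k : ℕ} (a : Fin k → ℕ) (b : Fin (k + 1) → ℕ)
    (ha : StrictMono a) (hb : StrictMono b) (han : ∀ i, a i < n)
    (hbox : ∀ i, b i.castSucc ≤ a i ∧ a i ≤ b i.succ) :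
    (univ.filter (fun j : Fin n => χ b j - χ a j = -1)).card = wcount a b := by
  unfold wcount
  apply (Finset.card_bij (fun (i : Fin k) _ => (⟨a i, han i⟩ : Fin n)) ?_ ?_ ?_).symm
  · intro i hi
    rw [mem_filter] at hi
    obtain ⟨-, h1, h2⟩ := hi
    rw [mem_filter]
    refine ⟨mem_univ _, ?_⟩
    have hχa : χ (n := n) a ⟨a i, han i⟩ = 1 := if_pos ⟨i, rfl⟩
    have hχb : χ (n := n) b ⟨a i, han i⟩ = 0 := by
      apply if_neg
      rintro ⟨l, hl⟩
      simp only at hl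
      rcases le_or_gt (l : ℕ) (i : ℕ) with hli | hli
      · have : b l ≤ b i.castSucc := hb.monotone (by rw [Fin.le_def]; simpa using hli)
        omega
      · have : b i.succ ≤ b l := hb.monotone (by rw [Fin.le_def]; simpa using hli)
        omega
    rw [hχa, hχb]
    ring
  · intro i₁ h₁ i₂ h₂ h
    have : a i₁ = a i₂ := by simpa [Fin.ext_iff] using h
    exact ha.injective this
  · intro j hj
    rw [mem_filter] at hj
    obtain ⟨-, hj⟩ := hj
    have hχa : χ (n := n) a j = 1 ∧ χ (n := n) b j = 0 := by
      rcases chi_vals (n := n) a j with h1 | h1 <;> rcases chi_vals (n := n) b j with h2 | h2 <;>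
        omega
    obtain ⟨i, hi⟩ : ∃ i, a i = (j : ℕ) := by
      have := hχa.1
      unfold χ at this
      by_contra hcon
      rw [if_neg hcon] at this
      omega
    have hnb : ¬ ∃ l, b l = (j : ℕ) := by
      have := hχa.2
      unfold χ at this
      by_contra hcon
      rw [if_pos hcon] at this
      omega
    refine ⟨i, ?_, Fin.ext (by simpa using hi)⟩
    rw [mem_filter]
    refine ⟨mem_univ _, ?_, ?_⟩
    · rcases lt_or_eq_of_le (hbox i).1 with h | h
      · rwa [hi] at h ⊢
        
      · exact absurd ⟨i.castSucc, by omega⟩ hnb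
    · rcases lt_or_eq_of_le (hbox i).2 with h | h
      · exact h
      · exact absurd ⟨i.succ, by omega⟩ hnb


lemma Ncnt_mono_le {n k : ℕ} {a : Fin k → ℕ} {b : Fin (k + 1) → ℕ}
    (hbox : ∀ i, b i.castSucc ≤ a i ∧ a i ≤ b i.succ) (t : ℕ) :
    Ncnt a t ≤ Ncnt b t ∧ Ncnt b t ≤ Ncnt a t + 1 := by
  constructor
  · apply Finset.card_le_card_of_injOn (fun i => i.castSucc)
    · intro i hi
      rw [Finset.mem_coe, mem_filter] at hi
      rw [Finset.mem_coe, mem_filter]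
      exact ⟨mem_univ _, le_trans (hbox i).1 hi.2⟩
    · intro i₁ _ i₂ _ h
      exact Fin.castSucc_injective _ h
  · have hsub : univ.filter (fun l : Fin (k + 1) => b l ≤ t)
        ⊆ insert 0 ((univ.filter (fun i : Fin k => a i ≤ t)).image Fin.succ) := by
      intro l hl
      rw [mem_filter] at hl
      induction l using Fin.cases with
      | zero => exact Finset.mem_insert_self _ _
      | succ i =>
        apply Finset.mem_insert_of_mem
        rw [Finset.mem_image]
        exact ⟨i, by rw [mem_filter]; exact ⟨mem_univ _, le_trans (hbox i).2 hl.2⟩, rfl⟩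
    calc Ncnt b t ≤ _ := Finset.card_le_card hsub
    _ ≤ ((univ.filter (fun i : Fin k => a i ≤ t)).image Fin.succ).card + 1 :=
      Finset.card_insert_le _ _
    _ ≤ Ncnt a t + 1 := by
      have := Finset.card_image_le (s := univ.filter (fun i : Fin k => a i ≤ t)) (f := Fin.succ)
      unfold Ncnt
      omega

lemma rps_of_box {n k : ℕ} (a : Fin k → ℕ) (b : Fin (k + 1) → ℕ)
    (ha : StrictMono a) (hb : StrictMono b) (han : ∀ i, a i < n) (hbn : ∀ i, b i < n)
    (hbox : ∀ i, b i.castSucc ≤ a i ∧ a i ≤ b i.succ) (j : Fin n) :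
    (∑ j' ∈ univ.filter (fun j' => j' ≤ j), (χ b j' - χ a j')) = 0 ∨
    (∑ j' ∈ univ.filter (fun j' => j' ≤ j), (χ b j' - χ a j')) = 1 := by
  rw [Finset.sum_sub_distrib, sum_chi_le b hb hbn, sum_chi_le a ha han]
  have := Ncnt_mono_le (n := n) hbox (j : ℕ)
  omega

lemma box_of_rps {n k : ℕ} (a : Fin k → ℕ) (b : Fin (k + 1) → ℕ)
    (ha : StrictMono a) (hb : StrictMono b) (han : ∀ i, a i < n) (hbn : ∀ i, b i < n)
    (h : ∀ j : Fin n, (∑ j' ∈ univ.filter (fun j' => j' ≤ j), (χ b j' - χ a j')) = 0 ∨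
      (∑ j' ∈ univ.filter (fun j' => j' ≤ j), (χ b j' - χ a j')) = 1) :
    ∀ i, b i.castSucc ≤ a i ∧ a i ≤ b i.succ := by
  have hN : ∀ j : Fin n, Ncnt a (j : ℕ) ≤ Ncnt b (j : ℕ) ∧
      Ncnt b (j : ℕ) ≤ Ncnt a (j : ℕ) + 1 := by
    intro j
    have := h j
    rw [Finset.sum_sub_distrib, sum_chi_le b hb hbn, sum_chi_le a ha han] at this
    omega
  intro i
  constructor
  · have h1 : (i : ℕ) < Ncnt a (a i) := lt_Ncnt_of_le ha.monotone le_rfl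
    have h2 : (i : ℕ) < Ncnt b (a i) := by
      have := (hN ⟨a i, han i⟩).1
      simp only at this
      omega
    have := le_of_lt_Ncnt hb.monotone (i := i.castSucc) (by simpa using h2)
    exact this
  · have h1 : ((i.succ : Fin (k + 1)) : ℕ) < Ncnt b (b i.succ) :=
      lt_Ncnt_of_le hb.monotone le_rfl
    have h2 : (i : ℕ) < Ncnt a (b i.succ) := by
      have := (hN ⟨b i.succ, hbn i.succ⟩).2
      simp only at this
      simp only [Fin.val_succ] at h1
      omega
    exact le_of_lt_Ncnt ha.monotone h2



lemma Ioi_castSucc_eq (k : ℕ) (i : Fin k) :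
    (Finset.Ioi (Fin.castSucc i) : Finset (Fin (k + 1)))
      = insert (Fin.last k) ((Finset.Ioi i).map Fin.castSuccEmb) := by
  ext x
  simp only [Finset.mem_Ioi, Finset.mem_insert, Finset.mem_map, Fin.lt_def,
    Fin.coe_castSucc]
  constructor
  · intro hx
    by_cases hlast : (x : ℕ) = k
    · exact Or.inl (Fin.ext (by simpa using hlast))
    · refine Or.inr ⟨⟨(x : ℕ), by omega⟩, ?_, ?_⟩
      · simpa using hx
      · exact Fin.ext (by simp)
  · rintro (rfl | ⟨y, hy, rfl⟩)
    · simpa using i.2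
    · simpa using hy

lemma Vq_succ (k : ℕ) (v : Fin (k + 1) → ℚ) :
    Vq (k + 1) v = (∏ i : Fin k, (v (Fin.last k) - v i.castSucc)) *
      Vq k (fun i => v i.castSucc) := by
  unfold Vq
  rw [Fin.prod_univ_castSucc]
  have hlast : ∏ j ∈ Finset.Ioi (Fin.last k), (v j - v (Fin.last k)) = 1 := by
    apply Finset.prod_eq_one
    intro j hj
    rw [Finset.mem_Ioi] at hj
    exact absurd hj (not_lt.mpr (Fin.le_last j))
  rw [hlast, mul_one]
  have hin : ∀ i : Fin k, ∏ j ∈ Finset.Ioi (Fin.castSucc i), (v j - v i.castSucc)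
      = (v (Fin.last k) - v i.castSucc) *
        ∏ j ∈ Finset.Ioi i, (v j.castSucc - v i.castSucc) := by
    intro i
    rw [Ioi_castSucc_eq, Finset.prod_insert, Finset.prod_map]
    · rfl
    · rw [Finset.mem_map]
      rintro ⟨y, -, hy⟩
      have := congrArg Fin.val hy
      simp at this
      omega
  rw [Finset.prod_congr rfl (fun i _ => hin i), Finset.prod_mul_distrib]

lemma Vq_nat_id (k : ℕ) : Vq k (fun i => (i : ℚ)) = ∏ m ∈ range k, (m.factorial : ℚ) := by
  induction k with
  | zero => simp [Vq]
  | succ k ih =>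
    rw [Vq_succ]
    have h1 : (fun i : Fin k => ((Fin.castSucc i : Fin (k + 1)) : ℚ)) = fun i : Fin k => (i : ℚ) := by
      funext i
      simp
    rw [h1, ih, Finset.prod_range_succ]
    have h2 : ∏ i : Fin k, (((Fin.last k : Fin (k + 1)) : ℚ) - ((Fin.castSucc i : Fin (k + 1)) : ℚ))
        = (k.factorial : ℚ) := by
      have h3 : ∀ i : Fin k, (((Fin.last k : Fin (k + 1)) : ℚ) - ((Fin.castSucc i : Fin (k + 1)) : ℚ))
          = ((k - (i : ℕ) : ℕ) : ℚ) := by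
        intro i
        have : (i : ℕ) ≤ k := le_of_lt i.2
        push_cast [Nat.cast_sub this]
        simp
      rw [Finset.prod_congr rfl (fun i _ => h3 i),
        Fin.prod_univ_eq_prod_range (fun l => ((k - l : ℕ) : ℚ)) k]
      rw [← Nat.cast_prod]
      congr 1
      have h4 : ∀ l ∈ range k, k - l = (fun j => j + 1) (k - 1 - l) := by
        intro l hl
        rw [Finset.mem_range] at hl
        simp only
        omega
      rw [Finset.prod_congr rfl h4, Finset.prod_range_reflect (fun j => j + 1) k,
        Finset.prod_range_add_one_eq_factorial]
    rw [h2]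
    ring

lemma Vq_nat_id_pos (k : ℕ) : 0 < Vq k (fun i => (i : ℚ)) := by
  rw [Vq_nat_id]
  apply Finset.prod_pos
  intro m _
  exact_mod_cast m.factorial_pos



def mu {n k : ℕ} (M : Fin k → Fin n → ℤ) : ℕ :=
  (Finset.univ.filter (fun p : Fin k × Fin n => M p.1 p.2 = -1)).card

noncomputable def PASM (n k : ℕ) (c : Fin k → ℕ) : Finset (Fin k → Fin n → ℤ) :=
  (Finset.Icc (fun _ _ => (-1 : ℤ)) (fun _ _ => 1)).filter (fun M =>
    (∀ i j, M i j = -1 ∨ M i j = 0 ∨ M i j = 1) ∧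
    (∀ i j, (∑ j' ∈ Finset.univ.filter (fun j' => j' ≤ j), M i j') = 0 ∨
            (∑ j' ∈ Finset.univ.filter (fun j' => j' ≤ j), M i j') = 1) ∧
    (∀ i j, (∑ i' ∈ Finset.univ.filter (fun i' => i' ≤ i), M i' j) = 0 ∨
            (∑ i' ∈ Finset.univ.filter (fun i' => i' ≤ i), M i' j) = 1) ∧
    (∀ i, ∑ j, M i j = 1) ∧
    (∀ j, ∑ i, M i j = χ c j))

lemma mem_PASM {n k : ℕ} {c : Fin k → ℕ} {M : Fin k → Fin n → ℤ} :
    M ∈ PASM n k c ↔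
      ((∀ i j, M i j = -1 ∨ M i j = 0 ∨ M i j = 1) ∧
      (∀ i j, (∑ j' ∈ Finset.univ.filter (fun j' => j' ≤ j), M i j') = 0 ∨
              (∑ j' ∈ Finset.univ.filter (fun j' => j' ≤ j), M i j') = 1) ∧
      (∀ i j, (∑ i' ∈ Finset.univ.filter (fun i' => i' ≤ i), M i' j) = 0 ∨
              (∑ i' ∈ Finset.univ.filter (fun i' => i' ≤ i), M i' j) = 1) ∧
      (∀ i, ∑ j, M i j = 1) ∧
      (∀ j, ∑ i, M i j = χ c j)) := by
  unfold PASM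
  rw [Finset.mem_filter, Finset.mem_Icc]
  constructor
  · exact fun h => h.2
  · intro h
    refine ⟨⟨?_, ?_⟩, h⟩
    · intro i j
      have := h.1 i j
      show (-1 : ℤ) ≤ M i j
      omega
    · intro i j
      have := h.1 i j
      show M i j ≤ 1
      omega

lemma filter_le_castSucc (k : ℕ) (i : Fin k) :
    (univ.filter (fun i' : Fin (k + 1) => i' ≤ i.castSucc))
      = (univ.filter (fun i'' : Fin k => i'' ≤ i)).map Fin.castSuccEmb := by
  ext x
  simp only [mem_filter, mem_univ, true_and, Finset.mem_map, Fin.le_def, Fin.coe_castSucc]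
  constructor
  · intro hx
    refine ⟨⟨(x : ℕ), by omega⟩, by simpa using hx, Fin.ext (by simp)⟩
  · rintro ⟨y, hy, rfl⟩
    simpa using hy

lemma sum_le_castSucc {k : ℕ} (f : Fin (k + 1) → ℤ) (i : Fin k) :
    ∑ i' ∈ univ.filter (fun i' : Fin (k + 1) => i' ≤ i.castSucc), f i'
      = ∑ i'' ∈ univ.filter (fun i'' : Fin k => i'' ≤ i), f i''.castSucc := by
  rw [filter_le_castSucc, Finset.sum_map]
  exact Finset.sum_congr rfl fun x _ => rfl

lemma filter_le_last (k : ℕ) :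
    (univ.filter (fun i' : Fin (k + 1) => i' ≤ Fin.last k)) = univ := by
  simp [Fin.le_last]

lemma mu_eq_sum {n k : ℕ} (M : Fin k → Fin n → ℤ) :
    mu M = ∑ i : Fin k, (univ.filter (fun j => M i j = -1)).card := by
  unfold mu
  rw [Finset.card_filter, Fintype.sum_prod_type]
  exact Finset.sum_congr rfl fun i _ => (Finset.card_filter _ _).symm

lemma mu_snoc {n k : ℕ} (M' : Fin k → Fin n → ℤ) (r : Fin n → ℤ) :
    mu (Fin.snoc M' r) = mu M' + (univ.filter (fun j => r j = -1)).card := by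
  rw [mu_eq_sum, mu_eq_sum, Fin.sum_univ_castSucc]
  simp


def uu {n k : ℕ} (M : Fin (k + 1) → Fin n → ℤ) : Fin n → ℤ :=
  fun j => ∑ i : Fin k, M i.castSucc j

lemma uu01 {n k : ℕ} {b : Fin (k + 1) → ℕ} {M : Fin (k + 1) → Fin n → ℤ}
    (hM : M ∈ PASM n (k + 1) b) (j : Fin n) : uu M j = 0 ∨ uu M j = 1 := by
  obtain ⟨-, -, hcps, -, -⟩ := mem_PASM.mp hM
  rcases k with _ | m
  · left; simp [uu]
  · have h0 : uu M j = ∑ i' ∈ univ.filter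
        (fun i' : Fin (m + 2) => i' ≤ (Fin.last m).castSucc), M i' j := by
      rw [sum_le_castSucc (fun i' => M i' j) (Fin.last m), filter_le_last m]
      rfl
    rw [h0]
    exact hcps _ j

lemma lastrow_eq {n k : ℕ} {b : Fin (k + 1) → ℕ} {M : Fin (k + 1) → Fin n → ℤ}
    (hM : M ∈ PASM n (k + 1) b) (j : Fin n) :
    M (Fin.last k) j = χ b j - uu M j := by
  obtain ⟨-, -, -, -, hcsum⟩ := mem_PASM.mp hM
  have h := hcsum j
  rw [Fin.sum_univ_castSucc] at h
  unfold uu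
  omega

def SS {n k : ℕ} (M : Fin (k + 1) → Fin n → ℤ) : Finset (Fin n) :=
  univ.filter (fun j => uu M j = 1)

lemma card_SS {n k : ℕ} {b : Fin (k + 1) → ℕ} {M : Fin (k + 1) → Fin n → ℤ}
    (hM : M ∈ PASM n (k + 1) b) : (SS M).card = k := by
  obtain ⟨-, -, -, hrs, -⟩ := mem_PASM.mp hM
  have h1 : ((SS M).card : ℤ) = ∑ j : Fin n, uu M j := by
    unfold SS
    rw [Finset.natCast_card_filter]
    refine Finset.sum_congr rfl fun j _ => ?_
    rcases uu01 hM j with h | h <;> rw [h] <;> simp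
  have h2 : ∑ j : Fin n, uu M j = k := by
    unfold uu
    rw [Finset.sum_comm, Finset.sum_congr rfl (fun i _ => hrs i.castSucc)]
    simp
  omega

def aOf {n k : ℕ} (M : Fin (k + 1) → Fin n → ℤ) (h : (SS M).card = k) : Fin k → ℕ :=
  fun i => ((SS M).orderEmbOfFin h i : ℕ)

lemma aOf_strictMono {n k : ℕ} (M : Fin (k + 1) → Fin n → ℤ) (h : (SS M).card = k) :
    StrictMono (aOf M h) := by
  intro i₁ i₂ hlt
  have := ((SS M).orderEmbOfFin h).strictMono hlt
  exact this

lemma aOf_lt {n k : ℕ} (M : Fin (k + 1) → Fin n → ℤ) (h : (SS M).card = k) (i : Fin k) :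
    aOf M h i < n := ((SS M).orderEmbOfFin h i).isLt

lemma chi_aOf {n k : ℕ} {b : Fin (k + 1) → ℕ} {M : Fin (k + 1) → Fin n → ℤ}
    (hM : M ∈ PASM n (k + 1) b) (h : (SS M).card = k) :
    χ (aOf M h) = uu M := by
  funext j
  have hiff : (∃ i, aOf M h i = (j : ℕ)) ↔ uu M j = 1 := by
    constructor
    · rintro ⟨i, hi⟩
      have hmem := (SS M).orderEmbOfFin_mem h i
      have : (SS M).orderEmbOfFin h i = j := Fin.ext hi
      rw [this] at hmem
      unfold SS at hmem
      rw [mem_filter] at hmem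
      exact hmem.2
    · intro hj
      have hjS : j ∈ SS M := by unfold SS; rw [mem_filter]; exact ⟨mem_univ _, hj⟩
      have : (j : Fin n) ∈ Set.range ((SS M).orderEmbOfFin h) := by
        rw [Finset.range_orderEmbOfFin]
        exact hjS
      obtain ⟨i, hi⟩ := this
      exact ⟨i, by rw [aOf, hi]⟩
  unfold χ
  rcases uu01 hM j with h0 | h0 <;> rw [h0]
  · rw [if_neg]
    intro hc
    rw [hiff.mp hc] at h0
    omega
  · rw [if_pos (hiff.mpr h0)]

lemma trunc_mem {n k : ℕ} {b : Fin (k + 1) → ℕ} {M : Fin (k + 1) → Fin n → ℤ}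
    (hM : M ∈ PASM n (k + 1) b) :
    (fun i : Fin k => M i.castSucc) ∈ PASM n k (aOf M (card_SS hM)) := by
  obtain ⟨hent, hrps, hcps, hrs, hcsum⟩ := mem_PASM.mp hM
  rw [mem_PASM]
  refine ⟨fun i j => hent i.castSucc j, fun i j => hrps i.castSucc j, ?_, fun i => hrs i.castSucc, ?_⟩
  · intro i j
    rw [← sum_le_castSucc (fun i' => M i' j) i]
    exact hcps i.castSucc j
  · intro j
    rw [chi_aOf hM (card_SS hM)]
    rfl

lemma aOf_box {n k : ℕ} {b : Fin (k + 1) → ℕ} {M : Fin (k + 1) → Fin n → ℤ}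
    (hM : M ∈ PASM n (k + 1) b) (hb : StrictMono b) (hbn : ∀ i, b i < n) :
    ∀ i, b i.castSucc ≤ aOf M (card_SS hM) i ∧ aOf M (card_SS hM) i ≤ b i.succ := by
  obtain ⟨-, hrps, -, -, -⟩ := mem_PASM.mp hM
  apply box_of_rps _ _ (aOf_strictMono M (card_SS hM)) hb (aOf_lt M (card_SS hM)) hbn
  intro j
  have h := hrps (Fin.last k) j
  have heq : ∀ j' : Fin n, M (Fin.last k) j' = χ b j' - χ (aOf M (card_SS hM)) j' := by
    intro j'
    rw [lastrow_eq hM j', chi_aOf hM (card_SS hM)]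
  rw [Finset.sum_congr rfl (fun j' _ => heq j')] at h
  exact h

lemma snoc_mem {n k : ℕ} {b : Fin (k + 1) → ℕ} {a : Fin k → ℕ} {M' : Fin k → Fin n → ℤ}
    (hb : StrictMono b) (hbn : ∀ i, b i < n)
    (hbox : ∀ i, b i.castSucc ≤ a i ∧ a i ≤ b i.succ) (hastrict : StrictMono a)
    (hM' : M' ∈ PASM n k a) :
    Fin.snoc M' (fun j => χ b j - χ a j) ∈ PASM n (k + 1) b := by
  have han : ∀ i, a i < n := fun i => lt_of_le_of_lt (hbox i).2 (hbn i.succ)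
  obtain ⟨hent, hrps, hcps, hrs, hcsum⟩ := mem_PASM.mp hM'
  rw [mem_PASM]
  refine ⟨?_, ?_, ?_, ?_, ?_⟩
  · intro i j
    induction i using Fin.lastCases with
    | last =>
      simp only [Fin.snoc_last]
      have h1 := chi_vals (n := n) b j
      have h2 := chi_vals (n := n) a j
      omega
    | cast i =>
      simp only [Fin.snoc_castSucc]
      exact hent i j
  · intro i j
    induction i using Fin.lastCases with
    | last =>
      have h := rps_of_box a b hastrict hb han hbn hbox j
      have heq : ∀ j' : Fin n, Fin.snoc (α := fun _ => Fin n → ℤ) M'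
          (fun j => χ b j - χ a j) (Fin.last k) j' = χ b j' - χ a j' := by
        intro j'
        simp only [Fin.snoc_last]
      rw [Finset.sum_congr rfl (fun j' _ => heq j')]
      exact h
    | cast i =>
      have heq : ∀ j' : Fin n, Fin.snoc (α := fun _ => Fin n → ℤ) M'
          (fun j => χ b j - χ a j) i.castSucc j' = M' i j' := by
        intro j'
        simp only [Fin.snoc_castSucc]
      rw [Finset.sum_congr rfl (fun j' _ => heq j')]
      exact hrps i j
  · intro i j
    induction i using Fin.lastCases with
    | last =>
      rw [filter_le_last, Fin.sum_univ_castSucc]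
      simp only [Fin.snoc_castSucc, Fin.snoc_last]
      rw [hcsum j]
      have h2 := chi_vals (n := n) b j
      omega
    | cast i =>
      rw [sum_le_castSucc (fun i' => Fin.snoc (α := fun _ => Fin n → ℤ) M'
        (fun j => χ b j - χ a j) i' j) i]
      have heq : ∀ i'' : Fin k, Fin.snoc (α := fun _ => Fin n → ℤ) M'
          (fun j => χ b j - χ a j) i''.castSucc j = M' i'' j := by
        intro i''
        simp only [Fin.snoc_castSucc]
      rw [Finset.sum_congr rfl (fun i'' _ => heq i'')]
      exact hcps i j
  · intro i
    induction i using Fin.lastCases with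
    | last =>
      have heq : ∀ j : Fin n, Fin.snoc (α := fun _ => Fin n → ℤ) M'
          (fun j => χ b j - χ a j) (Fin.last k) j = χ b j - χ a j := by
        intro j
        simp only [Fin.snoc_last]
      rw [Finset.sum_congr rfl (fun j _ => heq j), Finset.sum_sub_distrib,
        sum_chi b hb hbn, sum_chi a hastrict han]
      push_cast
      ring
    | cast i =>
      have heq : ∀ j : Fin n, Fin.snoc (α := fun _ => Fin n → ℤ) M'
          (fun j => χ b j - χ a j) i.castSucc j = M' i j := by
        intro j
        simp only [Fin.snoc_castSucc]
      rw [Finset.sum_congr rfl (fun j _ => heq j)]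
      exact hrs i
  · intro j
    rw [Fin.sum_univ_castSucc]
    simp only [Fin.snoc_castSucc, Fin.snoc_last]
    rw [hcsum j]
    ring


lemma sum_PASM_succ (n k : ℕ) (b : Fin (k + 1) → ℕ) (hb : StrictMono b) (hbn : ∀ i, b i < n) :
    ∑ M ∈ PASM n (k + 1) b, (2 : ℚ) ^ mu M
      = ∑ a ∈ (Finset.Icc (fun i => b i.castSucc) (fun i => b i.succ)).filter
          (fun a => ∀ i₁ i₂ : Fin k, i₁ < i₂ → a i₁ < a i₂),
          (2 : ℚ) ^ wcount a b * ∑ M' ∈ PASM n k a, (2 : ℚ) ^ mu M' := by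
  have hrhs : ∑ a ∈ (Finset.Icc (fun i => b i.castSucc) (fun i => b i.succ)).filter
          (fun a => ∀ i₁ i₂ : Fin k, i₁ < i₂ → a i₁ < a i₂),
          (2 : ℚ) ^ wcount a b * ∑ M' ∈ PASM n k a, (2 : ℚ) ^ mu M'
      = ∑ p ∈ ((Finset.Icc (fun i => b i.castSucc) (fun i => b i.succ)).filter
          (fun a => ∀ i₁ i₂ : Fin k, i₁ < i₂ → a i₁ < a i₂)).sigma (fun a => PASM n k a),
          (2 : ℚ) ^ wcount p.1 b * (2 : ℚ) ^ mu p.2 := by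
    rw [Finset.sum_sigma]
    exact Finset.sum_congr rfl fun a _ => by rw [Finset.mul_sum]
  rw [hrhs]
  refine Finset.sum_bij' (fun M hM => ⟨aOf M (card_SS hM), fun i => M i.castSucc⟩)
    (fun p _ => Fin.snoc p.2 (fun j => χ b j - χ p.1 j)) ?_ ?_ ?_ ?_ ?_
  · -- forward membership
    intro M hM
    rw [Finset.mem_sigma]
    constructor
    · rw [Finset.mem_filter, Finset.mem_Icc]
      refine ⟨⟨fun i => (aOf_box hM hb hbn i).1, fun i => (aOf_box hM hb hbn i).2⟩, ?_⟩
      intro i₁ i₂ hlt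
      exact aOf_strictMono M (card_SS hM) hlt
    · exact trunc_mem hM
  · -- backward membership
    intro p hp
    rw [Finset.mem_sigma, Finset.mem_filter, Finset.mem_Icc] at hp
    obtain ⟨⟨⟨hle1, hle2⟩, hstrict⟩, hM'⟩ := hp
    exact snoc_mem hb hbn (fun i => ⟨hle1 i, hle2 i⟩) (fun _ _ h => hstrict _ _ h) hM'
  · -- left inverse
    intro M hM
    dsimp only
    funext i
    induction i using Fin.lastCases with
    | last =>
      rw [Fin.snoc_last]
      funext j
      rw [lastrow_eq hM j, chi_aOf hM (card_SS hM)]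
    | cast i =>
      rw [Fin.snoc_castSucc]
  · -- right inverse
    intro p hp
    rw [Finset.mem_sigma, Finset.mem_filter, Finset.mem_Icc] at hp
    obtain ⟨⟨⟨hle1, hle2⟩, hstrict⟩, hM'⟩ := hp
    obtain ⟨-, -, -, -, hcsum⟩ := mem_PASM.mp hM'
    have hastrict : StrictMono p.1 := fun _ _ h => hstrict _ _ h
    have hbn' : ∀ i, b i < n := hbn
    have han : ∀ i, p.1 i < n := fun i => lt_of_le_of_lt (hle2 i) (hbn i.succ)
    set N := Fin.snoc (α := fun _ => Fin n → ℤ) p.2 (fun j => χ b j - χ p.1 j) with hN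
    have htrunc : (fun i : Fin k => N i.castSucc) = p.2 := by
      funext i
      rw [hN, Fin.snoc_castSucc]
    have huu : uu N = χ (n := n) p.1 := by
      funext j
      unfold uu
      have : ∀ i : Fin k, N i.castSucc j = p.2 i j := by
        intro i
        rw [hN, Fin.snoc_castSucc]
      rw [Finset.sum_congr rfl (fun i _ => this i)]
      exact hcsum j
    have hSS : SS N = univ.filter (fun j : Fin n => χ (n := n) p.1 j = 1) := by
      unfold SS
      rw [huu]
    have hcard : (SS N).card = k := card_SS (snoc_mem hb hbn (fun i => ⟨hle1 i, hle2 i⟩)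
      hastrict hM')
    have haOf : aOf N hcard = p.1 := by
      have hf : StrictMono (fun i : Fin k => (⟨p.1 i, han i⟩ : Fin n)) := by
        intro i₁ i₂ hlt
        simp only [Fin.mk_lt_mk]
        exact hastrict hlt
      have hfs : ∀ i : Fin k, (⟨p.1 i, han i⟩ : Fin n) ∈ SS N := by
        intro i
        rw [hSS, mem_filter]
        exact ⟨mem_univ _, if_pos ⟨i, rfl⟩⟩
      have := Finset.orderEmbOfFin_unique hcard hfs hf
      funext i
      rw [aOf, ← this]
    -- assemble sigma equality
    have h2 : (fun i : Fin k => N i.castSucc) = p.2 := htrunc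
    cases p with
    | mk a M2 =>
      simp only at haOf h2 ⊢
      exact Sigma.ext haOf (heq_of_eq h2)
  · -- weights
    intro M hM
    have hMeq : M = Fin.snoc (α := fun _ => Fin n → ℤ) (fun i : Fin k => M i.castSucc)
        (M (Fin.last k)) := by
      funext i
      induction i using Fin.lastCases with
      | last => rw [Fin.snoc_last]
      | cast i => rw [Fin.snoc_castSucc]
    have hmu : mu M = mu (fun i : Fin k => M i.castSucc)
        + (univ.filter (fun j => M (Fin.last k) j = -1)).card := by
      conv_lhs => rw [hMeq]
      exact mu_snoc _ _
    have hcardw : (univ.filter (fun j => M (Fin.last k) j = -1)).card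
        = wcount (aOf M (card_SS hM)) b := by
      have heq : (univ.filter (fun j : Fin n => M (Fin.last k) j = -1))
          = univ.filter (fun j : Fin n => χ b j - χ (aOf M (card_SS hM)) j = -1) := by
        apply Finset.filter_congr
        intro j _
        rw [lastrow_eq hM j, chi_aOf hM (card_SS hM)]
      rw [heq]
      exact card_neg_one _ b (aOf_strictMono M (card_SS hM)) hb (aOf_lt M (card_SS hM))
        (aOf_box hM hb hbn)
    rw [hmu, hcardw, pow_add]
    ring


lemma Vq_zero_of_eq {k : ℕ} (v : Fin k → ℚ) {i₁ i₂ : Fin k} (h : i₁ < i₂)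
    (he : v i₁ = v i₂) : Vq k v = 0 := by
  unfold Vq
  apply Finset.prod_eq_zero (Finset.mem_univ i₁)
  apply Finset.prod_eq_zero (Finset.mem_Ioi.mpr h)
  rw [he]
  ring

lemma key (n : ℕ) : ∀ (k : ℕ) (b : Fin k → ℕ), StrictMono b → (∀ i, b i < n) →
    ∑ M ∈ PASM n k b, (2 : ℚ) ^ mu M
      = 2 ^ (k.choose 2) * Vq k (fun i => (b i : ℚ)) / Vq k (fun i => (i : ℚ)) := by
  intro k
  induction k with
  | zero =>
    intro b _ _
    have hsingle : PASM n 0 b = {fun i => i.elim0} := by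
      apply Finset.eq_singleton_iff_unique_mem.mpr
      constructor
      · rw [mem_PASM]
        refine ⟨fun i => i.elim0, fun i => i.elim0, fun i => i.elim0, fun i => i.elim0, ?_⟩
        intro j
        simp [χ]
      · intro M _
        funext i
        exact i.elim0
    rw [hsingle, Finset.sum_singleton]
    have hmu : mu (n := n) (fun i : Fin 0 => i.elim0) = 0 := by
      unfold mu
      simp
    rw [hmu]
    simp [Vq]
  | succ k ih =>
    intro b hbs hbn
    rw [sum_PASM_succ n k b hbs hbn]
    set D := Vq k (fun i => (i : ℚ)) with hD
    have hDpos : 0 < D := Vq_nat_id_pos k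
    have h1 : ∀ a ∈ (Finset.Icc (fun i => b i.castSucc) (fun i => b i.succ)).filter
        (fun a => ∀ i₁ i₂ : Fin k, i₁ < i₂ → a i₁ < a i₂),
        (2 : ℚ) ^ wcount a b * ∑ M' ∈ PASM n k a, (2 : ℚ) ^ mu M'
          = (2 ^ (k.choose 2) / D) * ((2 : ℚ) ^ wcount a b * Vq k (fun i => (a i : ℚ))) := by
      intro a ha
      rw [Finset.mem_filter, Finset.mem_Icc] at ha
      obtain ⟨⟨-, hle2⟩, hstrict⟩ := ha
      have hstrict' : StrictMono a := fun _ _ h => hstrict _ _ h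
      have han : ∀ i, a i < n := fun i => lt_of_le_of_lt (hle2 i) (hbn i.succ)
      rw [ih a hstrict' han]
      field_simp
    rw [Finset.sum_congr rfl h1, ← Finset.mul_sum]
    have h2 : ∑ a ∈ (Finset.Icc (fun i => b i.castSucc) (fun i => b i.succ)).filter
        (fun a => ∀ i₁ i₂ : Fin k, i₁ < i₂ → a i₁ < a i₂),
        (2 : ℚ) ^ wcount a b * Vq k (fun i => (a i : ℚ))
          = ∑ a ∈ Finset.Icc (fun i => b i.castSucc) (fun i => b i.succ),
            (2 : ℚ) ^ wcount a b * Vq k (fun i => (a i : ℚ)) := by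
      apply Finset.sum_subset (Finset.filter_subset _ _)
      intro a haIcc hafil
      rw [Finset.mem_filter] at hafil
      push_neg at hafil
      obtain ⟨i₁, i₂, hlt, hle⟩ := hafil haIcc
      rw [Finset.mem_Icc] at haIcc
      obtain ⟨hle1, hle2⟩ := haIcc
      have heq : a i₁ = a i₂ := by
        have hbb : b i₁.succ ≤ b i₂.castSucc := by
          apply hbs.monotone
          rw [Fin.le_def]
          simp only [Fin.val_succ, Fin.coe_castSucc]
          exact hlt
        have hA : a i₁ ≤ b i₁.succ := hle2 i₁
        have hB : b i₂.castSucc ≤ a i₂ := hle1 i₂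
        omega
      rw [Vq_zero_of_eq (fun i => ((a i : ℚ))) hlt (by simp only [heq]), mul_zero]
    rw [h2, stepSum k b hbs]
    have hDsucc : Vq (k + 1) (fun i => (i : ℚ)) = D * (k.factorial : ℚ) := by
      rw [hD, Vq_nat_id, Vq_nat_id, Finset.prod_range_succ]
    have hchoose : (k + 1).choose 2 = k.choose 2 + k := by
      rw [Nat.choose_succ_succ]
      simp [Nat.choose_one_right, Nat.add_comm]
    rw [hDsucc, hchoose, pow_add]
    have hfac : (k.factorial : ℚ) ≠ 0 := by
      exact_mod_cast k.factorial_ne_zero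
    field_simp


end ASM2

/-- An alternating-sign matrix of order `n`: entries in `{-1,0,1}`, all partial sums of
each row and each column (from the start) are `0` or `1`, and every row and column sums
to `1`.  This is equivalent to the condition that in each row and column the nonzero
entries alternate in sign, beginning and ending with `+1`. -/
def IsASM {n : ℕ} (A : Matrix (Fin n) (Fin n) ℤ) : Prop :=
  (∀ i j, A i j = -1 ∨ A i j = 0 ∨ A i j = 1) ∧
  (∀ i j, ∑ j' ∈ Finset.univ.filter (fun j' => j' ≤ j), A i j' = 0 ∨
          ∑ j' ∈ Finset.univ.filter (fun j' => j' ≤ j), A i j' = 1) ∧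
  (∀ i j, ∑ i' ∈ Finset.univ.filter (fun i' => i' ≤ i), A i' j = 0 ∨
          ∑ i' ∈ Finset.univ.filter (fun i' => i' ≤ i), A i' j = 1) ∧
  (∀ i, ∑ j, A i j = 1) ∧
  (∀ j, ∑ i, A i j = 1)

/-- The `2`-enumeration of ASMs: the sum over all ASMs `A` of order `n` of
`2 ^ (number of −1 entries of A)` equals `2 ^ (n(n-1)/2)`. -/
theorem asm_two_enumeration {n : ℕ} (s : Finset (Matrix (Fin n) (Fin n) ℤ))
    (hs : ∀ A, A ∈ s ↔ IsASM A) :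
    (∑ A ∈ s,
        2 ^ (Finset.univ.filter (fun p : Fin n × Fin n => A p.1 p.2 = -1)).card) =
      2 ^ (n * (n - 1) / 2) := by
  have hid : StrictMono (fun i : Fin n => (i : ℕ)) := fun _ _ h => h
  have hlt : ∀ i : Fin n, (fun i : Fin n => (i : ℕ)) i < n := fun i => i.isLt
  have hkey := ASM2.key n n (fun i : Fin n => (i : ℕ)) hid hlt
  have hDne : ASM2.Vq n (fun i => (i : ℚ)) ≠ 0 := ne_of_gt (ASM2.Vq_nat_id_pos n)
  rw [eq_div_iff hDne] at hkey
  have hkey2 : ∑ M ∈ ASM2.PASM n n (fun i : Fin n => (i : ℕ)), (2 : ℚ) ^ ASM2.mu M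
      = 2 ^ (n.choose 2) := by
    have hveq : (fun i : Fin n => (((fun i : Fin n => (i : ℕ)) i : ℕ) : ℚ))
        = fun i : Fin n => (i : ℚ) := rfl
    rw [hveq] at hkey
    exact mul_right_cancel₀ hDne hkey
  have hmem : ∀ A : Matrix (Fin n) (Fin n) ℤ,
      A ∈ s ↔ (A : Fin n → Fin n → ℤ) ∈ ASM2.PASM n n (fun i : Fin n => (i : ℕ)) := by
    intro A
    rw [hs]
    refine Iff.trans ?_ (ASM2.mem_PASM (M := A)).symm
    unfold IsASM
    have hχ : ∀ j : Fin n, ASM2.χ (n := n) (fun i : Fin n => (i : ℕ)) j = 1 := by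
      intro j
      exact if_pos ⟨j, rfl⟩
    constructor
    · rintro ⟨h1, h2, h3, h4, h5⟩
      exact ⟨h1, h2, h3, h4, fun j => by rw [h5 j, hχ j]⟩
    · rintro ⟨h1, h2, h3, h4, h5⟩
      exact ⟨h1, h2, h3, h4, fun j => by rw [h5 j, hχ j]⟩
  have hQ : ((∑ A ∈ s,
      2 ^ (Finset.univ.filter (fun p : Fin n × Fin n => A p.1 p.2 = -1)).card : ℕ) : ℚ)
      = ((2 ^ (n * (n - 1) / 2) : ℕ) : ℚ) := by
    push_cast
    rw [← Nat.choose_two_right, ← hkey2]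
    apply Finset.sum_bij (fun (A : Matrix (Fin n) (Fin n) ℤ) (_ : A ∈ s) =>
      (A : Fin n → Fin n → ℤ))
    · intro A hA
      exact (hmem A).mp hA
    · intro A₁ h₁ A₂ h₂ h
      exact h
    · intro M hM
      exact ⟨M, (hmem M).mpr hM, rfl⟩
    · intro A hA
      rfl
  exact_mod_cast hQ
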